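/- Let G be an abelian group, f : G → ℂ, and h_1, ..., h_s ∈ G such that Δ_{h_k}^{m+1} f(x) = 0 for all x ∈ G and k = 1, ..., s. Then Δ_h^{sm+1} f(x) = 0 for every x ∈ G and every h in the subgroup H = h_1 ℤ + ... + h_s ℤ generated by h_1, ..., h_s. -/

import Mathlib

open Finset

namespace MontelAux

variable {G : Type*} [AddCommGroup G]

noncomputable section

/-- shift operator -/
def sh (v : G) : Module.End ℂ (G → ℂ) where
  toFun g := fun x => g (x + v)
  map_add' _ _ := rfl
  map_smul' _ _ := rfl

lemma sh_apply (v : G) (g : G → ℂ) (x : G) : sh v g x = g (x + v) := rfl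

lemma sh_zero : sh (0 : G) = 1 := by
  apply LinearMap.ext; intro g; funext x
  simp [sh_apply]

lemma sh_add (a b : G) : sh (a + b) = sh a * sh b := by
  apply LinearMap.ext; intro g; funext x
  simp [sh_apply, Module.End.mul_apply, add_assoc]

/-- shift as a monoid hom from `Multiplicative G` -/
def shHom : Multiplicative G →* Module.End ℂ (G → ℂ) where
  toFun v := sh v.toAdd
  map_one' := sh_zero
  map_mul' _ _ := sh_add _ _

abbrev A (G : Type*) [AddCommGroup G] := AddMonoidAlgebra ℂ G

/-- action of the group algebra on functions -/
def ρ : A G →ₐ[ℂ] Module.End ℂ (G → ℂ) := AddMonoidAlgebra.lift ℂ _ G shHom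

lemma ρ_single (v : G) (r : ℂ) : ρ (AddMonoidAlgebra.single v r) = r • sh v := by
  simp [ρ, AddMonoidAlgebra.lift_single, shHom]

def δ (v : G) : A G := AddMonoidAlgebra.single v 1 - 1

lemma ρ_δ (v : G) : ρ (δ v) = sh v - 1 := by
  rw [δ, map_sub, map_one, ρ_single, one_smul]

/-- the ideal of elements annihilating `f` -/
def If (f : G → ℂ) : Ideal (A G) where
  carrier := {u | ρ u f = 0}
  add_mem' := fun hu hw => by
    simp only [Set.mem_setOf_eq, map_add, LinearMap.add_apply] at *
    rw [hu, hw, add_zero]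
  zero_mem' := by simp
  smul_mem' := fun c u hu => by
    simp only [Set.mem_setOf_eq, smul_eq_mul] at *
    rw [map_mul, Module.End.mul_apply, hu, map_zero]

lemma mem_If {f : G → ℂ} {u : A G} : u ∈ If f ↔ ρ u f = 0 := Iff.rfl

lemma sh_pow (v : G) (j : ℕ) : sh v ^ j = sh (j • v) := by
  induction j with
  | zero => simp [sh_zero]
  | succ n ih => rw [pow_succ, ih, succ_nsmul, sh_add]

lemma single_one_mul_single_one (a b : G) :
    (AddMonoidAlgebra.single a (1:ℂ)) * AddMonoidAlgebra.single b 1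
      = AddMonoidAlgebra.single (a + b) 1 := by
  rw [AddMonoidAlgebra.single_mul_single, one_mul]

/-- evaluation of powers of the difference operator -/
lemma eval (v : G) (N : ℕ) (f : G → ℂ) (x : G) :
    ((sh v - 1) ^ N) f x
      = ∑ j ∈ range (N + 1), (N.choose j : ℂ) * (-1) ^ (N - j) * f (x + j • v) := by
  rw [← ρ_δ, ← map_pow, δ, sub_pow, map_sum, LinearMap.sum_apply, Finset.sum_apply]
  refine Finset.sum_congr rfl fun j hj => ?_
  rw [Finset.mem_range] at hj
  rw [AddMonoidAlgebra.single_pow, one_pow, one_pow, mul_one, map_mul, map_mul,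
    map_pow, map_neg, map_one, map_natCast, ρ_single, one_smul]
  have h1 : (-(1 : Module.End ℂ (G → ℂ))) ^ (j + N) = algebraMap ℂ _ ((-1) ^ (j + N)) := by
    rw [map_pow, map_neg, map_one]
  have h2 : ((N.choose j : ℕ) : Module.End ℂ (G → ℂ)) = algebraMap ℂ _ (N.choose j : ℂ) := by
    simp
  rw [h1, h2]
  simp only [Module.End.mul_apply, Module.algebraMap_end_apply, map_smul,
    LinearMap.smul_apply, Pi.smul_apply, sh_apply, smul_eq_mul]
  have h3 : (-1 : ℂ) ^ (j + N) = (-1) ^ (N - j) := by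
    rw [show j + N = (N - j) + 2 * j by omega, pow_add, pow_mul]
    simp
  rw [h3]
  ring

lemma δ_zero : δ (0 : G) = 0 := by
  simp [δ, AddMonoidAlgebra.one_def]

lemma δ_dvd_δ_nsmul (a : G) (n : ℕ) : δ a ∣ δ (n • a) := by
  have : δ (n • a) = AddMonoidAlgebra.single a (1:ℂ) ^ n - 1 ^ n := by
    rw [AddMonoidAlgebra.single_pow, one_pow, one_pow, δ]
  rw [this]
  exact sub_dvd_pow_sub_pow _ _ n

lemma δ_dvd_δ_neg (a : G) : δ a ∣ δ (-a) := by
  refine ⟨-AddMonoidAlgebra.single (-a) (1:ℂ), ?_⟩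
  have h1 : AddMonoidAlgebra.single a (1:ℂ) * AddMonoidAlgebra.single (-a) 1 = 1 := by
    rw [single_one_mul_single_one, add_neg_cancel, ← AddMonoidAlgebra.one_def]
  rw [δ, δ, mul_neg, sub_mul, one_mul, h1]
  ring

lemma δ_dvd_δ_zsmul (a : G) (n : ℤ) : δ a ∣ δ (n • a) := by
  rcases Int.natAbs_eq n with hn | hn
  · rw [hn, natCast_zsmul]; exact δ_dvd_δ_nsmul _ _
  · rw [hn, neg_zsmul, natCast_zsmul]
    exact (δ_dvd_δ_nsmul a n.natAbs).trans (δ_dvd_δ_neg _)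

/-- key combination lemma -/
lemma key {I : Ideal (A G)} {a b : G} {p q : ℕ}
    (ha : δ a ^ (p + 1) ∈ I) (hb : δ b ^ (q + 1) ∈ I) :
    δ (a + b) ^ (p + q + 1) ∈ I := by
  have hd : δ (a + b) = AddMonoidAlgebra.single a (1:ℂ) * δ b + δ a := by
    rw [δ, δ, δ, mul_sub, mul_one, single_one_mul_single_one]
    ring
  rw [hd, add_pow]
  refine Ideal.sum_mem _ fun k hk => ?_
  rw [Finset.mem_range] at hk
  by_cases hkq : q + 1 ≤ k
  · refine Ideal.mem_of_dvd _ ?_ hb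
    refine (Dvd.dvd.mul_right ?_ _).mul_right _
    rw [mul_pow]
    exact Dvd.dvd.mul_left (pow_dvd_pow _ hkq) _
  · refine Ideal.mem_of_dvd _ ?_ ha
    refine Dvd.dvd.mul_right ?_ _
    refine Dvd.dvd.mul_left ?_ _
    exact pow_dvd_pow _ (by omega)

end

end MontelAux

open MontelAux Finset in
theorem montel_group_version
    {G : Type*} [AddCommGroup G] (m s : ℕ) (f : G → ℂ) (h : Fin s → G)
    (hf : ∀ k : Fin s, ∀ x : G,
      ∑ j ∈ Finset.range (m + 2),
        ((m + 1).choose j : ℂ) * (-1) ^ (m + 1 - j) * f (x + j • h k) = 0) :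
    ∀ x : G, ∀ v ∈ AddSubgroup.closure (Set.range h),
      ∑ j ∈ Finset.range (s * m + 2),
        ((s * m + 1).choose j : ℂ) * (-1) ^ (s * m + 1 - j) * f (x + j • v) = 0 := by
  intro x v hv
  rw [← Submodule.span_int_eq_addSubgroupClosure, Submodule.mem_toAddSubgroup,
    Submodule.mem_span_range_iff_exists_fun] at hv
  obtain ⟨c, hc⟩ := hv
  have hbase : ∀ k : Fin s, δ (h k) ^ (m + 1) ∈ If f := by
    intro k
    rw [mem_If, map_pow, ρ_δ]
    funext y
    rw [show (0 : G → ℂ) y = 0 from rfl, eval]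
    exact hf k y
  have main : ∀ t : Finset (Fin s),
      δ (∑ k ∈ t, c k • h k) ^ (t.card * m + 1) ∈ If f := by
    intro t
    induction t using Finset.induction_on with
    | empty =>
        rw [Finset.sum_empty, δ_zero, zero_pow (by omega)]
        exact (If f).zero_mem
    | @insert a t hnotmem ih =>
        rw [Finset.sum_insert hnotmem, Finset.card_insert_of_notMem hnotmem]
        have h1 : δ (c a • h a) ^ (m + 1) ∈ If f :=
          Ideal.mem_of_dvd _ (pow_dvd_pow_of_dvd (δ_dvd_δ_zsmul _ _) _) (hbase a)
        have h2 := key h1 ih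
        have heq : (t.card + 1) * m + 1 = m + t.card * m + 1 := by ring
        rw [heq]
        exact h2
  have hfin := main Finset.univ
  rw [Finset.card_univ, Fintype.card_fin, hc, mem_If, map_pow, ρ_δ] at hfin
  have := congrFun hfin x
  rw [eval] at this
  exact this
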